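/- For every bounded real sequence u and every positive integer k, the limit superior as δ→1⁻ of the Abel sums (1−δ)·∑_{t=1}^{∞} δ^{t−1} u_t is at most the limit superior of the averages (1/(kT))·∑_{t=1}^{kT} u_t as T→∞. -/

import Mathlib

open Filter

def Bdd (u : ℕ → ℝ) : Prop := ∃ C : ℝ, ∀ t, |u t| ≤ C

noncomputable def avg (u : ℕ → ℝ) (T : ℕ) : ℝ := (∑ t ∈ Finset.range T, u t) / T

noncomputable def abel (u : ℕ → ℝ) (δ : ℝ) : ℝ := (1 - δ) * ∑' t : ℕ, δ ^ t * u t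

-- partial sums bound
lemma abs_S_le (u : ℕ → ℝ) (C : ℝ) (hC : ∀ t, |u t| ≤ C) (n : ℕ) :
    |∑ t ∈ Finset.range n, u t| ≤ n * C := by
  calc |∑ t ∈ Finset.range n, u t| ≤ ∑ t ∈ Finset.range n, |u t| :=
        Finset.abs_sum_le_sum_abs _ _
    _ ≤ ∑ _t ∈ Finset.range n, C := Finset.sum_le_sum fun t _ => hC t
    _ = n * C := by simp [mul_comm]

lemma abel_le (u : ℕ → ℝ) (C a M : ℝ) (hC : ∀ t, |u t| ≤ C)
    (hS : ∀ n : ℕ, (∑ t ∈ Finset.range n, u t) ≤ a * n + M)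
    {δ : ℝ} (hδ0 : 0 ≤ δ) (hδ1 : δ < 1) :
    abel u δ ≤ a + M * (1 - δ) := by
  have hδn : ‖δ‖ < 1 := by rwa [Real.norm_eq_abs, abs_of_nonneg hδ0]
  set S : ℕ → ℝ := fun n => ∑ t ∈ Finset.range n, u t with hSdef
  -- summability facts
  have hsum_geo : Summable (fun t : ℕ => δ ^ t) := summable_geometric_of_lt_one hδ0 hδ1
  have hsum_tgeo : Summable (fun t : ℕ => (t : ℝ) * δ ^ t) := by
    simpa using summable_pow_mul_geometric_of_norm_lt_one 1 hδn
  have hsum_u : Summable (fun t : ℕ => δ ^ t * u t) := by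
    apply Summable.of_norm_bounded (g := fun t : ℕ => C * δ ^ t) (hsum_geo.mul_left C)
    intro t
    rw [norm_mul, Real.norm_eq_abs, Real.norm_eq_abs, abs_of_nonneg (pow_nonneg hδ0 t),
      mul_comm]
    exact mul_le_mul_of_nonneg_right (hC t) (pow_nonneg hδ0 t)
  have hsum_S1 : Summable (fun t : ℕ => S (t + 1) * δ ^ t) := by
    apply Summable.of_norm_bounded
      (g := fun t : ℕ => C * ((t : ℝ) * δ ^ t) + C * δ ^ t)
      ((hsum_tgeo.mul_left C).add (hsum_geo.mul_left C))
    intro t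
    rw [norm_mul, Real.norm_eq_abs, Real.norm_eq_abs, abs_of_nonneg (pow_nonneg hδ0 t)]
    have h1 := abs_S_le u C hC (t + 1)
    have h2 : (0:ℝ) ≤ δ ^ t := pow_nonneg hδ0 t
    have := mul_le_mul_of_nonneg_right h1 h2
    push_cast at this ⊢
    nlinarith
  have hsum_S : Summable (fun t : ℕ => S t * δ ^ t) := by
    apply Summable.of_norm_bounded
      (g := fun t : ℕ => C * ((t : ℝ) * δ ^ t))
      (hsum_tgeo.mul_left C)
    intro t
    rw [norm_mul, Real.norm_eq_abs, Real.norm_eq_abs, abs_of_nonneg (pow_nonneg hδ0 t)]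
    have h1 := abs_S_le u C hC t
    have h2 : (0:ℝ) ≤ δ ^ t := pow_nonneg hδ0 t
    nlinarith [mul_le_mul_of_nonneg_right h1 h2]
  -- Abel summation identity
  set B : ℝ := ∑' t : ℕ, S (t + 1) * δ ^ t with hB
  have hshift : (∑' t : ℕ, S t * δ ^ t) = δ * B := by
    rw [Summable.tsum_eq_zero_add hsum_S]
    simp only [hSdef]
    rw [show (∑ t ∈ Finset.range 0, u t) = 0 by simp, zero_mul, zero_add]
    rw [hB, ← tsum_mul_left]
    apply tsum_congr
    intro t
    ring
  have hiden : (∑' t : ℕ, δ ^ t * u t) = (1 - δ) * B := by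
    have : (fun t : ℕ => δ ^ t * u t) = fun t : ℕ => S (t + 1) * δ ^ t - S t * δ ^ t := by
      funext t
      have : u t = S (t + 1) - S t := by
        simp [hSdef, Finset.sum_range_succ]
      rw [this]; ring
    rw [this, Summable.tsum_sub hsum_S1 hsum_S, hshift]
    ring
  -- bound B
  have hBle : B ≤ a * (∑' t : ℕ, ((t : ℝ) + 1) * δ ^ t) + M * (1 - δ)⁻¹ := by
    have hsum_t1 : Summable (fun t : ℕ => ((t : ℝ) + 1) * δ ^ t) := by
      have := hsum_tgeo.add hsum_geo
      apply this.congr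
      intro t; ring
    have hrhs : Summable (fun t : ℕ => (a * ((t : ℝ) + 1) + M) * δ ^ t) := by
      have := (hsum_t1.mul_left a).add (hsum_geo.mul_left M)
      apply this.congr
      intro t; ring
    have step : B ≤ ∑' t : ℕ, (a * ((t : ℝ) + 1) + M) * δ ^ t := by
      apply Summable.tsum_le_tsum _ hsum_S1 hrhs
      intro t
      apply mul_le_mul_of_nonneg_right _ (pow_nonneg hδ0 t)
      have := hS (t + 1)
      push_cast at this ⊢
      linarith
    calc B ≤ ∑' t : ℕ, (a * ((t : ℝ) + 1) + M) * δ ^ t := step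
      _ = a * (∑' t : ℕ, ((t : ℝ) + 1) * δ ^ t) + M * (1 - δ)⁻¹ := by
          rw [← tsum_geometric_of_lt_one hδ0 hδ1, ← tsum_mul_left, ← tsum_mul_left,
            ← Summable.tsum_add (hsum_t1.mul_left a) (hsum_geo.mul_left M)]
          apply tsum_congr
          intro t; ring
  have hδne : (1 : ℝ) - δ ≠ 0 := by linarith
  have hval : (∑' t : ℕ, ((t : ℝ) + 1) * δ ^ t) = ((1 - δ) ^ 2)⁻¹ := by
    have h1 : (∑' t : ℕ, (t : ℝ) * δ ^ t) = δ / (1 - δ) ^ 2 :=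
      tsum_coe_mul_geometric_of_norm_lt_one hδn
    have h2 : (∑' t : ℕ, ((t : ℝ) + 1) * δ ^ t)
        = (∑' t : ℕ, (t : ℝ) * δ ^ t) + ∑' t : ℕ, δ ^ t := by
      rw [← Summable.tsum_add hsum_tgeo hsum_geo]
      apply tsum_congr
      intro t; ring
    rw [h2, h1, tsum_geometric_of_lt_one hδ0 hδ1]
    field_simp
    ring
  -- conclude
  have habel : abel u δ = (1 - δ) ^ 2 * B := by
    rw [abel, hiden]; ring
  rw [habel]
  have hsq : (0 : ℝ) ≤ (1 - δ) ^ 2 := sq_nonneg _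
  calc (1 - δ) ^ 2 * B ≤ (1 - δ) ^ 2 * (a * ((1 - δ) ^ 2)⁻¹ + M * (1 - δ)⁻¹) := by
        rw [← hval]; exact mul_le_mul_of_nonneg_left hBle hsq
    _ = a + M * (1 - δ) := by field_simp


lemma abs_abel_le (u : ℕ → ℝ) (C : ℝ) (hC : ∀ t, |u t| ≤ C)
    {δ : ℝ} (hδ0 : 0 ≤ δ) (hδ1 : δ < 1) : |abel u δ| ≤ C := by
  have hsum_geo : Summable (fun t : ℕ => δ ^ t) := summable_geometric_of_lt_one hδ0 hδ1
  have hnorm : ∀ t : ℕ, ‖δ ^ t * u t‖ ≤ C * δ ^ t := by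
    intro t
    rw [norm_mul, Real.norm_eq_abs, Real.norm_eq_abs, abs_of_nonneg (pow_nonneg hδ0 t),
      mul_comm]
    exact mul_le_mul_of_nonneg_right (hC t) (pow_nonneg hδ0 t)
  have hsum_norm : Summable (fun t : ℕ => ‖δ ^ t * u t‖) :=
    Summable.of_nonneg_of_le (fun t => norm_nonneg _) hnorm (hsum_geo.mul_left C)
  have h1 : |∑' t : ℕ, δ ^ t * u t| ≤ ∑' t : ℕ, ‖δ ^ t * u t‖ := by
    rw [← Real.norm_eq_abs]
    exact norm_tsum_le_tsum_norm hsum_norm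
  have h2 : (∑' t : ℕ, ‖δ ^ t * u t‖) ≤ ∑' t : ℕ, C * δ ^ t :=
    Summable.tsum_le_tsum hnorm hsum_norm (hsum_geo.mul_left C)
  have h3 : (∑' t : ℕ, C * δ ^ t) = C * (1 - δ)⁻¹ := by
    rw [tsum_mul_left, tsum_geometric_of_lt_one hδ0 hδ1]
  have hδne : (0:ℝ) < 1 - δ := by linarith
  rw [abel, abs_mul, abs_of_pos hδne]
  calc (1 - δ) * |∑' t : ℕ, δ ^ t * u t| ≤ (1 - δ) * (C * (1 - δ)⁻¹) := by
        apply mul_le_mul_of_nonneg_left _ (le_of_lt hδne)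
        rw [← h3]; exact h1.trans h2
    _ = C := by field_simp

theorem stmt_1 (u : ℕ → ℝ) (hu : Bdd u) (k : ℕ) (hk : 0 < k) :
    limsup (fun δ : ℝ => abel u δ) (nhdsWithin 1 (Set.Iio 1)) ≤
      limsup (fun T : ℕ => avg u (k * T)) atTop := by
  obtain ⟨C, hC⟩ := hu
  have hC0 : 0 ≤ C := le_trans (abs_nonneg _) (hC 0)
  set L := limsup (fun T : ℕ => avg u (k * T)) atTop with hLdef
  have havg_bd : ∀ n : ℕ, |avg u n| ≤ C := by
    intro n
    rcases Nat.eq_zero_or_pos n with h | h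
    · simp [avg, h, hC0]
    · have hn : (0:ℝ) < n := by exact_mod_cast h
      rw [avg, abs_div, abs_of_pos hn, div_le_iff₀ hn]
      calc |∑ t ∈ Finset.range n, u t| ≤ n * C := abs_S_le u C hC n
        _ = C * n := mul_comm _ _
  have hbdd : IsBoundedUnder (· ≤ ·) atTop (fun T : ℕ => avg u (k * T)) :=
    ⟨C, eventually_map.2 (Eventually.of_forall fun T => (le_abs_self _).trans (havg_bd _))⟩
  refine le_of_forall_pos_le_add ?_
  intro ε hε
  have hev : ∀ᶠ T in atTop, avg u (k * T) < L + ε / 2 :=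
    eventually_lt_of_limsup_lt (by rw [← hLdef]; linarith) hbdd
  obtain ⟨T1, hT1⟩ := eventually_atTop.1 hev
  set a := L + ε / 2 with ha
  set M := (|a| + C) * k * (T1 + 1) with hM
  have hMnn : 0 ≤ M := by positivity
  have hS : ∀ n : ℕ, (∑ t ∈ Finset.range n, u t) ≤ a * n + M := by
    intro n
    set T := n / k with hT
    set r := n % k with hr
    have hnkr : k * T + r = n := Nat.div_add_mod n k
    have hrk : r < k := Nat.mod_lt n hk
    have hnR : (n : ℝ) = (k : ℝ) * T + r := by exact_mod_cast hnkr.symm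
    have hrkR : (r : ℝ) < k := by exact_mod_cast hrk
    have hsplit : (∑ t ∈ Finset.range n, u t)
        = (∑ t ∈ Finset.range (k * T), u t) + ∑ i ∈ Finset.range r, u (k * T + i) := by
      rw [← hnkr, Finset.sum_range_add]
    have hpart2 : (∑ i ∈ Finset.range r, u (k * T + i)) ≤ (r : ℝ) * C := by
      calc (∑ i ∈ Finset.range r, u (k * T + i))
          ≤ ∑ _i ∈ Finset.range r, C :=
            Finset.sum_le_sum fun i _ => (le_abs_self _).trans (hC _)
        _ = (r : ℝ) * C := by simp [mul_comm]
    have hpart1 : (∑ t ∈ Finset.range (k * T), u t)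
        ≤ a * ((k : ℝ) * T) + (|a| + C) * k * T1 := by
      rcases le_or_gt T1 T with hle | hlt
      · rcases Nat.eq_zero_or_pos (k * T) with hz | hpos
        · rw [hz]
          simp only [Finset.range_zero, Finset.sum_empty]
          have : ((k : ℝ) * T) = ((k * T : ℕ) : ℝ) := by push_cast; ring
          have hkT0 : ((k * T : ℕ) : ℝ) = 0 := by exact_mod_cast hz
          rw [this, hkT0, mul_zero, zero_add]
          positivity
        · have hkTpos : (0:ℝ) < ((k * T : ℕ) : ℝ) := by exact_mod_cast hpos
          have := hT1 T hle
          rw [avg, div_lt_iff₀ hkTpos] at this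
          have h2 : a * ((k * T : ℕ) : ℝ) = a * ((k : ℝ) * T) := by push_cast; ring
          have h3 : (0:ℝ) ≤ (|a| + C) * k * T1 := by positivity
          nlinarith [this]
      · have hTle : (T : ℝ) ≤ (T1 : ℝ) := by
          exact_mod_cast le_of_lt hlt
        have h1 : (∑ t ∈ Finset.range (k * T), u t) ≤ ((k * T : ℕ) : ℝ) * C :=
          (le_abs_self _).trans (abs_S_le u C hC _)
        have h2 : ((k * T : ℕ) : ℝ) = (k : ℝ) * T := by push_cast; ring
        have hkR : (0:ℝ) ≤ (k : ℝ) := by positivity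
        have hTR : (0:ℝ) ≤ (T : ℝ) := by positivity
        have habs : -a ≤ |a| := neg_le_abs a
        have hX : (0:ℝ) ≤ (k:ℝ) * T := mul_nonneg hkR hTR
        have hXY : (k:ℝ) * T ≤ (k:ℝ) * T1 := mul_le_mul_of_nonneg_left hTle hkR
        have h6 : (0:ℝ) ≤ ((k:ℝ) * T) * (|a| + a) := mul_nonneg hX (by linarith)
        have h7 : ((k:ℝ) * T) * (|a| + C) ≤ ((k:ℝ) * T1) * (|a| + C) :=
          mul_le_mul_of_nonneg_right hXY (by positivity)
        nlinarith [abs_nonneg a]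
    -- combine
    have hra : -(a * r) ≤ |a| * k := by
      have h1 : -(a * r) ≤ |a| * r := by
        have := neg_le_abs a
        have hrnn : (0:ℝ) ≤ (r:ℝ) := by positivity
        nlinarith
      have h2 : |a| * r ≤ |a| * k := by
        apply mul_le_mul_of_nonneg_left (le_of_lt hrkR) (abs_nonneg a)
      linarith
    have hkC : (r : ℝ) * C ≤ (k : ℝ) * C := by
      apply mul_le_mul_of_nonneg_right (le_of_lt hrkR) hC0
    rw [hsplit, hnR, hM]
    nlinarith [hpart1, hpart2]
  have hev2 : ∀ᶠ δ in nhdsWithin (1:ℝ) (Set.Iio 1), abel u δ ≤ L + ε := by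
    have h01 : ∀ᶠ δ in nhdsWithin (1:ℝ) (Set.Iio 1), 0 < δ :=
      eventually_nhdsWithin_of_eventually_nhds (eventually_gt_nhds zero_lt_one)
    have hlt : ∀ᶠ δ in nhdsWithin (1:ℝ) (Set.Iio 1), δ < 1 :=
      eventually_mem_nhdsWithin.mono fun x hx => hx
    have htend : Tendsto (fun δ : ℝ => M * (1 - δ)) (nhdsWithin (1:ℝ) (Set.Iio 1)) (nhds 0) := by
      have h : Tendsto (fun δ : ℝ => M * (1 - δ)) (nhds 1) (nhds (M * (1 - 1))) :=
        tendsto_const_nhds.mul (tendsto_const_nhds.sub tendsto_id)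
      simpa using h.mono_left nhdsWithin_le_nhds
    have hsmall : ∀ᶠ δ in nhdsWithin (1:ℝ) (Set.Iio 1), M * (1 - δ) ≤ ε / 2 :=
      htend.eventually (eventually_le_nhds (by linarith))
    filter_upwards [h01, hlt, hsmall] with δ h1 h2 h3
    have := abel_le u C a M hC hS (le_of_lt h1) h2
    rw [ha] at this
    linarith
  have hlb : ∀ᶠ δ in nhdsWithin (1:ℝ) (Set.Iio 1), -C ≤ abel u δ := by
    have h01 : ∀ᶠ δ in nhdsWithin (1:ℝ) (Set.Iio 1), 0 < δ :=
      eventually_nhdsWithin_of_eventually_nhds (eventually_gt_nhds zero_lt_one)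
    have hlt : ∀ᶠ δ in nhdsWithin (1:ℝ) (Set.Iio 1), δ < 1 :=
      eventually_mem_nhdsWithin.mono fun x hx => hx
    filter_upwards [h01, hlt] with δ h1 h2
    have h4 := abs_abel_le u C hC (le_of_lt h1) h2
    linarith [(abs_le.1 h4).1]
  exact limsup_le_of_le (isCoboundedUnder_le_of_eventually_le _ hlb) hev2
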